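/- The Dini condition holds for all planar convex domains (Proposition 7.2): Let Ω ⊆ ℝ² be a nonempty open bounded convex set. Then there exists a finite constant C* such that for every x ∈ ∂Ω, ∫₀¹ M_x(t)/t² dt ≤ C*. -/

import Mathlib

open Set
open scoped RealInnerProductSpace

noncomputable section

/-- A unit vector `ν` is an outer supporting normal of `Ω` at `y` if
`⟨ν, z − y⟩ ≤ 0` for all `z ∈ Ω`. -/
def IsOuterNormal {E : Type*} [NormedAddCommGroup E] [InnerProductSpace ℝ E]
    (Ω : Set E) (y ν : E) : Prop :=
  ‖ν‖ = 1 ∧ ∀ z ∈ Ω, ⟪ν, z - y⟫ ≤ 0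

/-- `M_x(t) = sup {⟨ν, y − x⟩ : y ∈ ∂Ω, 0 < ‖y − x‖ ≤ t, ν an outer supporting normal at y}`
(`sSup ∅ = 0` in `ℝ`, so the empty case gives `0`). -/
noncomputable def Mfun {E : Type*} [NormedAddCommGroup E] [InnerProductSpace ℝ E]
    (Ω : Set E) (x : E) (t : ℝ) : ℝ :=
  sSup {m : ℝ | ∃ y ν : E, y ∈ frontier Ω ∧ 0 < ‖y - x‖ ∧ ‖y - x‖ ≤ t ∧
    IsOuterNormal Ω y ν ∧ m = ⟪ν, y - x⟫}

/-- The rescaled spherical slice `V_t = {ω ∈ 𝕊^{n−1} : t·ω ∈ Ω}`. -/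
def Vslice {E : Type*} [NormedAddCommGroup E] [InnerProductSpace ℝ E]
    (Ω : Set E) (t : ℝ) : Set E :=
  {ω | ‖ω‖ = 1 ∧ t • ω ∈ Ω}

/-- `S_c = {t ∈ (0,1) : M₀(s) ≤ c·s for all s ∈ [t/4, 4t]}`. -/
def Sset {E : Type*} [NormedAddCommGroup E] [InnerProductSpace ℝ E]
    (Ω : Set E) (c : ℝ) : Set ℝ :=
  {t | t ∈ Ioo (0:ℝ) 1 ∧ ∀ s ∈ Icc (t/4) (4*t), Mfun Ω 0 s ≤ c * s}

/-- Cap hypothesis: the slice `V₁` contains the geodesic cap of radius `rstar` around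
the unit vector `e`. -/
def CapHyp {E : Type*} [NormedAddCommGroup E] [InnerProductSpace ℝ E]
    (Ω : Set E) (e : E) (rstar : ℝ) : Prop :=
  ‖e‖ = 1 ∧ ∀ ω : E, ‖ω‖ = 1 → Real.cos rstar < ⟪ω, e⟫ → ω ∈ Vslice Ω 1


open MeasureTheory

namespace DiniCore

variable {E : Type*} [NormedAddCommGroup E] [InnerProductSpace ℝ E]

/-- Values `q·s − η` of admissible one-sided supported pairs at scale `τ`. -/
def sideSet (C : Set E) (x u w : E) (Q τ : ℝ) : Set ℝ :=
  {v | ∃ s η q y, |q| ≤ Q ∧ 0 < s ∧ s ≤ τ ∧ y ∈ C ∧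
      ⟪y - x, w⟫ = s ∧ ⟪y - x, u⟫ = η ∧
      (∀ z ∈ C, q * ⟪z - x, w⟫ - ⟪z - x, u⟫ ≤ q * s - η) ∧ v = q * s - η}

/-- Slopes of admissible pairs at scale `τ`, together with the base slope `q₀`. -/
def slopeSet (C : Set E) (x u w : E) (Q q₀ τ : ℝ) : Set ℝ :=
  insert q₀ {q | ∃ s η y, |q| ≤ Q ∧ 0 < s ∧ s ≤ τ ∧ y ∈ C ∧
      ⟪y - x, w⟫ = s ∧ ⟪y - x, u⟫ = η ∧
      (∀ z ∈ C, q * ⟪z - x, w⟫ - ⟪z - x, u⟫ ≤ q * s - η)}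

variable {C : Set E} {x u w : E} {Q q₀ τ τ' : ℝ}

lemma sideSet_nonneg (hxC : x ∈ C) {v : ℝ} (hv : v ∈ sideSet C x u w Q τ) : 0 ≤ v := by
  obtain ⟨s, η, q, y, _, _, _, hyC, hys, hyη, hsupp, rfl⟩ := hv
  have h := hsupp x hxC
  simpa using h

lemma sideSet_le (hq₀ : |q₀| ≤ Q)
    (hsupp₀ : ∀ z ∈ C, q₀ * ⟪z - x, w⟫ - ⟪z - x, u⟫ ≤ 0)
    {v : ℝ} (hv : v ∈ sideSet C x u w Q τ) : v ≤ 2 * Q * τ := by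
  obtain ⟨s, η, q, y, hqQ, hs0, hsτ, hyC, hys, hyη, hsupp, rfl⟩ := hv
  have h0 := hsupp₀ y hyC
  rw [hys, hyη] at h0
  have h1 := abs_le.1 hqQ
  have h2 := abs_le.1 hq₀
  have h3 : q - q₀ ≤ 2 * Q := by linarith
  have h4 : (q - q₀) * s ≤ (2 * Q) * s := mul_le_mul_of_nonneg_right h3 hs0.le
  have h5 : (2 * Q) * s ≤ (2 * Q) * τ := by
    have hQ0 : 0 ≤ Q := (abs_nonneg q).trans hqQ
    exact mul_le_mul_of_nonneg_left hsτ (by linarith)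
  nlinarith [h4, h5]

lemma sideSet_bddAbove (hq₀ : |q₀| ≤ Q)
    (hsupp₀ : ∀ z ∈ C, q₀ * ⟪z - x, w⟫ - ⟪z - x, u⟫ ≤ 0) :
    BddAbove (sideSet C x u w Q τ) :=
  ⟨2 * Q * τ, fun _ hv => sideSet_le hq₀ hsupp₀ hv⟩

lemma psi_nonneg (hxC : x ∈ C) : 0 ≤ sSup (sideSet C x u w Q τ) :=
  Real.sSup_nonneg fun _ hv => sideSet_nonneg hxC hv

lemma psi_le (hq₀ : |q₀| ≤ Q)
    (hsupp₀ : ∀ z ∈ C, q₀ * ⟪z - x, w⟫ - ⟪z - x, u⟫ ≤ 0)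
    (hτ : 0 ≤ τ) : sSup (sideSet C x u w Q τ) ≤ 2 * Q * τ := by
  have hQ0 : 0 ≤ Q := (abs_nonneg q₀).trans hq₀
  exact Real.sSup_le (fun _ hv => sideSet_le hq₀ hsupp₀ hv) (by positivity)

lemma slopeSet_bddAbove (hq₀ : |q₀| ≤ Q) : BddAbove (slopeSet C x u w Q q₀ τ) := by
  refine ⟨Q, ?_⟩
  rintro r (rfl | ⟨s, η, y, hrQ, _⟩)
  · exact (abs_le.1 hq₀).2
  · exact (abs_le.1 hrQ).2

lemma le_G (hq₀ : |q₀| ≤ Q) : q₀ ≤ sSup (slopeSet C x u w Q q₀ τ) :=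
  le_csSup (slopeSet_bddAbove hq₀) (mem_insert _ _)

lemma G_le (hq₀ : |q₀| ≤ Q) : sSup (slopeSet C x u w Q q₀ τ) ≤ Q := by
  refine csSup_le ⟨q₀, mem_insert _ _⟩ ?_
  rintro r (rfl | ⟨s, η, y, hrQ, _⟩)
  · exact (abs_le.1 hq₀).2
  · exact (abs_le.1 hrQ).2

lemma G_mono (hq₀ : |q₀| ≤ Q) (h : τ' ≤ τ) :
    sSup (slopeSet C x u w Q q₀ τ') ≤ sSup (slopeSet C x u w Q q₀ τ) := by
  refine csSup_le_csSup (slopeSet_bddAbove hq₀) ⟨q₀, mem_insert _ _⟩ ?_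
  rintro r (rfl | ⟨s, η, y, hrQ, hs0, hsτ, hrest⟩)
  · exact mem_insert _ _
  · exact Or.inr ⟨s, η, y, hrQ, hs0, hsτ.trans h, hrest⟩


set_option maxHeartbeats 2000000 in
lemma key (hC : Convex ℝ C) (hcomp : IsCompact C) (hxC : x ∈ C)
    (hq₀ : |q₀| ≤ Q)
    (hsupp₀ : ∀ z ∈ C, q₀ * ⟪z - x, w⟫ - ⟪z - x, u⟫ ≤ 0)
    (hτ : 0 < τ) :
    sSup (sideSet C x u w Q τ) ≤ sSup (sideSet C x u w Q (τ / 2)) +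
      τ * (sSup (slopeSet C x u w Q q₀ τ) - sSup (slopeSet C x u w Q q₀ (τ / 2))) := by
  set ψ2 := sSup (sideSet C x u w Q (τ / 2)) with hψ2def
  set G1 := sSup (slopeSet C x u w Q q₀ τ) with hG1def
  set G2 := sSup (slopeSet C x u w Q q₀ (τ / 2)) with hG2def
  have hG21 : G2 ≤ G1 := G_mono hq₀ (by linarith)
  have hψ20 : 0 ≤ ψ2 := psi_nonneg hxC
  have hrhs0 : 0 ≤ ψ2 + τ * (G1 - G2) :=
    add_nonneg hψ20 (mul_nonneg hτ.le (by linarith))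
  refine Real.sSup_le ?_ hrhs0
  rintro v ⟨s, η, q, y, hqQ, hs0, hsτ, hyC, hys, hyη, hsupp, rfl⟩
  by_cases hcase : s ≤ τ / 2
  · have hv2 : q * s - η ≤ ψ2 :=
      le_csSup (sideSet_bddAbove hq₀ hsupp₀)
        ⟨s, η, q, y, hqQ, hs0, hcase, hyC, hys, hyη, hsupp, rfl⟩
    nlinarith [mul_nonneg hτ.le (show (0:ℝ) ≤ G1 - G2 by linarith)]
  push_neg at hcase
  have hσ0 : 0 < τ / 2 := by linarith
  have hwcont : Continuous fun z : E => ⟪z - x, w⟫ :=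
    (continuous_id.sub continuous_const).inner continuous_const
  have hucont : Continuous fun z : E => ⟪z - x, u⟫ :=
    (continuous_id.sub continuous_const).inner continuous_const
  have hcolc : IsCompact (C ∩ {z | ⟪z - x, w⟫ = τ / 2}) :=
    hcomp.inter_right (isClosed_eq hwcont continuous_const)
  have hz₁ : x + ((τ/2)/s) • (y - x) ∈ C ∩ {z | ⟪z - x, w⟫ = τ / 2} := by
    constructor
    · have hble : (τ/2)/s ≤ 1 := by rw [div_le_one hs0]; linarith
      have hb0 : (0:ℝ) ≤ (τ/2)/s := by positivity
      have h := hC hxC hyC (by linarith : (0:ℝ) ≤ 1 - (τ/2)/s) hb0 (by ring)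
      convert h using 1
      module
    · show ⟪x + ((τ/2)/s) • (y - x) - x, w⟫ = τ / 2
      rw [add_sub_cancel_left, real_inner_smul_left, hys]
      field_simp
  obtain ⟨y', hy'mem, hy'minon⟩ := hcolc.exists_isMinOn ⟨_, hz₁⟩ hucont.continuousOn
  obtain ⟨hy'C, hy'w0⟩ := hy'mem
  have hy'w : ⟪y' - x, w⟫ = τ / 2 := hy'w0
  set η' := ⟪y' - x, u⟫ with hη'def
  have hy'min : ∀ z ∈ C, ⟪z - x, w⟫ = τ/2 → η' ≤ ⟪z - x, u⟫ := by
    intro z hz hzw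
    exact hy'minon ⟨hz, hzw⟩
  set S' : Set ℝ := {r | (∃ z ∈ C, ⟪z - x, w⟫ < τ/2 ∧
        r = (η' - ⟪z - x, u⟫) / (τ/2 - ⟪z - x, w⟫)) ∨
      (∃ η'' y'', y'' ∈ C ∧ ⟪y'' - x, w⟫ = τ/2 ∧ ⟪y'' - x, u⟫ = η'' ∧ |r| ≤ Q ∧
        (∀ z ∈ C, r * ⟪z - x, w⟫ - ⟪z - x, u⟫ ≤ r * (τ/2) - η''))} with hS'def
  have hub : ∀ r ∈ S', r ≤ q := by
    rintro r (⟨z, hzC, hzlt, rfl⟩ | ⟨η'', y'', hy''C, hy''w, hy''η, hrQ, hrsupp⟩)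
    · rw [div_le_iff₀ (by linarith)]
      have hden : 0 < s - ⟪z - x, w⟫ := by linarith
      set θ : ℝ := (s - τ/2) / (s - ⟪z - x, w⟫) with hθdef
      have hθ0 : 0 ≤ θ := div_nonneg (by linarith) (by linarith)
      have hθ1 : θ ≤ 1 := by rw [div_le_one hden]; linarith
      have hcombo : θ • z + (1 - θ) • y ∈ C := hC hzC hyC hθ0 (by linarith) (by ring)
      have hrw : θ • z + (1 - θ) • y - x = θ • (z - x) + (1 - θ) • (y - x) := by
        module
      have habs : ⟪θ • z + (1 - θ) • y - x, w⟫ = τ/2 := by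
        rw [hrw, inner_add_left, real_inner_smul_left, real_inner_smul_left, hys, hθdef]
        field_simp
        ring
      have hmin := hy'min _ hcombo habs
      have hval : ⟪θ • z + (1 - θ) • y - x, u⟫ = θ * ⟪z - x, u⟫ + (1 - θ) * η := by
        rw [hrw, inner_add_left, real_inner_smul_left, real_inner_smul_left, hyη]
      rw [hval] at hmin
      have hsz := hsupp z hzC
      have hkey : (1 - θ) * (s - ⟪z - x, w⟫) = τ/2 - ⟪z - x, w⟫ := by
        rw [hθdef]; field_simp; ring
      have hkey2 : q * ((1 - θ) * (s - ⟪z - x, w⟫)) = q * (τ/2 - ⟪z - x, w⟫) := by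
        rw [hkey]
      nlinarith [mul_le_mul_of_nonneg_left
        (show η - ⟪z - x, u⟫ ≤ q * (s - ⟪z - x, w⟫) by linarith)
        (show (0:ℝ) ≤ 1 - θ by linarith), hmin, hkey2]
    · have hA := hrsupp y hyC
      rw [hys, hyη] at hA
      have hB := hsupp y'' hy''C
      rw [hy''w, hy''η] at hB
      have hsσ : (0:ℝ) < s - τ/2 := by linarith
      have hmul : r * (s - τ/2) ≤ q * (s - τ/2) := by nlinarith
      exact le_of_mul_le_mul_right hmul hsσ
  have hS'ne : S'.Nonempty := by
    refine ⟨(η' - ⟪x - x, u⟫) / (τ/2 - ⟪x - x, w⟫), ?_⟩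
    rw [hS'def]
    exact Or.inl ⟨x, hxC, by simp [hσ0], rfl⟩
  have hbddS' : BddAbove S' := ⟨q, hub⟩
  set P := sSup S' with hPdef
  have hPq : P ≤ q := csSup_le hS'ne hub
  have hr₀mem : (η' - ⟪x - x, u⟫) / (τ/2 - ⟪x - x, w⟫) ∈ S' := by
    rw [hS'def]; exact Or.inl ⟨x, hxC, by simp [hσ0], rfl⟩
  have hr₀val : (η' - ⟪x - x, u⟫) / (τ/2 - ⟪x - x, w⟫) = η' / (τ/2) := by simp
  have hq₀P : q₀ ≤ P := by
    have hη'q₀ : q₀ * (τ/2) - η' ≤ 0 := by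
      have h := hsupp₀ y' hy'C
      rw [hy'w, ← hη'def] at h
      exact h
    have h1 : q₀ ≤ η' / (τ/2) := by rw [le_div_iff₀ hσ0]; linarith
    calc q₀ ≤ η' / (τ/2) := h1
      _ = (η' - ⟪x - x, u⟫) / (τ/2 - ⟪x - x, w⟫) := hr₀val.symm
      _ ≤ P := le_csSup hbddS' hr₀mem
  have hPsupp : ∀ z ∈ C, P * ⟪z - x, w⟫ - ⟪z - x, u⟫ ≤ P * (τ/2) - η' := by
    intro z hzC
    rcases lt_trichotomy ⟪z - x, w⟫ (τ/2) with hlt | heq | hgt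
    · have hmem : (η' - ⟪z - x, u⟫) / (τ/2 - ⟪z - x, w⟫) ∈ S' := by
        rw [hS'def]; exact Or.inl ⟨z, hzC, hlt, rfl⟩
      have h := le_csSup hbddS' hmem
      rw [div_le_iff₀ (by linarith)] at h
      nlinarith [h]
    · have h := hy'min z hzC heq
      rw [heq]; linarith
    · have hub2 : ∀ r ∈ S', r ≤ (⟪z - x, u⟫ - η') / (⟪z - x, w⟫ - τ/2) := by
        rintro r (⟨z'', hz''C, hz''lt, rfl⟩ | ⟨η'', y'', hy''C, hy''w, hy''η, hrQ, hrsupp⟩)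
        · rw [div_le_div_iff₀ (by linarith) (by linarith)]
          have hden : 0 < ⟪z - x, w⟫ - ⟪z'' - x, w⟫ := by linarith
          set θ : ℝ := (⟪z - x, w⟫ - τ/2) / (⟪z - x, w⟫ - ⟪z'' - x, w⟫) with hθdef
          have hθ0 : 0 ≤ θ := div_nonneg (by linarith) (by linarith)
          have hθ1 : θ ≤ 1 := by rw [div_le_one hden]; linarith
          have hcombo : θ • z'' + (1 - θ) • z ∈ C := hC hz''C hzC hθ0 (by linarith) (by ring)
          have hrw : θ • z'' + (1 - θ) • z - x = θ • (z'' - x) + (1 - θ) • (z - x) := by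
            module
          have habs : ⟪θ • z'' + (1 - θ) • z - x, w⟫ = τ/2 := by
            rw [hrw, inner_add_left, real_inner_smul_left, real_inner_smul_left, hθdef]
            field_simp
            ring
          have hmin := hy'min _ hcombo habs
          have hval : ⟪θ • z'' + (1 - θ) • z - x, u⟫
              = θ * ⟪z'' - x, u⟫ + (1 - θ) * ⟪z - x, u⟫ := by
            rw [hrw, inner_add_left, real_inner_smul_left, real_inner_smul_left]
          rw [hval] at hmin
          have hkey1 : θ * (⟪z - x, w⟫ - ⟪z'' - x, w⟫) = ⟪z - x, w⟫ - τ/2 := by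
            rw [hθdef]; field_simp
          have hkey2 : (1 - θ) * (⟪z - x, w⟫ - ⟪z'' - x, w⟫) = τ/2 - ⟪z'' - x, w⟫ := by
            rw [hθdef]; field_simp; ring
          have hmin2 : η' * (⟪z - x, w⟫ - ⟪z'' - x, w⟫)
              ≤ ⟪z'' - x, u⟫ * (⟪z - x, w⟫ - τ/2) + ⟪z - x, u⟫ * (τ/2 - ⟪z'' - x, w⟫) := by
            have h := mul_le_mul_of_nonneg_right hmin (le_of_lt hden)
            calc η' * (⟪z - x, w⟫ - ⟪z'' - x, w⟫)
                ≤ (θ * ⟪z'' - x, u⟫ + (1 - θ) * ⟪z - x, u⟫) * (⟪z - x, w⟫ - ⟪z'' - x, w⟫) := h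
              _ = ⟪z'' - x, u⟫ * (θ * (⟪z - x, w⟫ - ⟪z'' - x, w⟫))
                  + ⟪z - x, u⟫ * ((1 - θ) * (⟪z - x, w⟫ - ⟪z'' - x, w⟫)) := by ring
              _ = ⟪z'' - x, u⟫ * (⟪z - x, w⟫ - τ/2) + ⟪z - x, u⟫ * (τ/2 - ⟪z'' - x, w⟫) := by
                  rw [hkey1, hkey2]
          nlinarith [hmin2]
        · have hη''min : η' ≤ η'' := by
            rw [← hy''η]; exact hy'min y'' hy''C hy''w
          have h := hrsupp z hzC
          rw [le_div_iff₀ (by linarith)]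
          nlinarith [h]
      have h := csSup_le hS'ne hub2
      rw [le_div_iff₀ (by linarith)] at h
      nlinarith [h]
  have hPQ : |P| ≤ Q :=
    abs_le.2 ⟨by linarith [(abs_le.1 hq₀).1], by linarith [(abs_le.1 hqQ).2]⟩
  have hmemP : P * (τ/2) - η' ∈ sideSet C x u w Q (τ/2) :=
    ⟨τ/2, η', P, y', hPQ, hσ0, le_refl _, hy'C, hy'w, rfl, hPsupp, rfl⟩
  have hvP : P * (τ/2) - η' ≤ ψ2 := le_csSup (sideSet_bddAbove hq₀ hsupp₀) hmemP
  have hqG1 : q ≤ G1 :=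
    le_csSup (slopeSet_bddAbove hq₀)
      (Or.inr ⟨s, η, y, hqQ, hs0, hsτ, hyC, hys, hyη, hsupp⟩)
  have hG2P : G2 ≤ P := by
    refine csSup_le ⟨q₀, mem_insert _ _⟩ ?_
    rintro r (rfl | ⟨s'', η'', y'', hrQ, hs''0, hs''τ, hy''C, hy''w, hy''η, hrsupp⟩)
    · exact hq₀P
    · rcases eq_or_lt_of_le hs''τ with heq | hlt
      · refine le_csSup hbddS' ?_
        rw [hS'def]
        refine Or.inr ⟨η'', y'', hy''C, by rw [hy''w, heq], hy''η, hrQ, ?_⟩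
        intro z hz
        have h := hrsupp z hz
        rw [heq] at h
        exact h
      · have hslope : (η' - ⟪y'' - x, u⟫) / (τ/2 - ⟪y'' - x, w⟫) ∈ S' := by
          rw [hS'def]
          exact Or.inl ⟨y'', hy''C, by rw [hy''w]; exact hlt, rfl⟩
        rw [hy''η, hy''w] at hslope
        have hr : r ≤ (η' - η'') / (τ/2 - s'') := by
          rw [le_div_iff₀ (by linarith)]
          have h := hrsupp y' hy'C
          rw [hy'w, ← hη'def] at h
          nlinarith [h]
        exact hr.trans (le_csSup hbddS' hslope)
  have hy'suppy := hPsupp y hyC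
  rw [hys, hyη] at hy'suppy
  have e3 : 0 ≤ q - P := by linarith
  have e5 : (q - P) * s ≤ (q - P) * τ := mul_le_mul_of_nonneg_left hsτ e3
  have e6 : (q - P) * τ ≤ (G1 - G2) * τ := mul_le_mul_of_nonneg_right (by linarith) hτ.le
  nlinarith [hvP, hy'suppy, e5, e6]

lemma telescope (hC : Convex ℝ C) (hcomp : IsCompact C) (hxC : x ∈ C)
    (hq₀ : |q₀| ≤ Q)
    (hsupp₀ : ∀ z ∈ C, q₀ * ⟪z - x, w⟫ - ⟪z - x, u⟫ ≤ 0)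
    (n : ℕ) :
    ∑ k ∈ Finset.range n, (2:ℝ)^k * sSup (sideSet C x u w Q ((1/2:ℝ)^k)) ≤ 6 * Q := by
  have hQ0 : 0 ≤ Q := (abs_nonneg q₀).trans hq₀
  set ψf : ℕ → ℝ := fun k => sSup (sideSet C x u w Q ((1/2:ℝ)^k)) with hψf
  set Gf : ℕ → ℝ := fun k => sSup (slopeSet C x u w Q q₀ ((1/2:ℝ)^k)) with hGf
  have hψ0 : ∀ k, 0 ≤ ψf k := fun k => psi_nonneg hxC
  have hψub : ∀ k, ψf k ≤ 2 * Q * (1/2:ℝ)^k := fun k =>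
    psi_le (q₀ := q₀) hq₀ hsupp₀ (by positivity)
  have hGub : ∀ k, Gf k ≤ Q := fun k => G_le hq₀
  have hGlb : ∀ k, q₀ ≤ Gf k := fun k => le_G hq₀
  have hrec : ∀ k, (2:ℝ)^k * ψf k ≤ (2:ℝ)^k * ψf (k+1) + (Gf k - Gf (k+1)) := by
    intro k
    have h := key (τ := (1/2:ℝ)^k) hC hcomp hxC hq₀ hsupp₀ (by positivity)
    have h2 : ((1/2:ℝ)^k) / 2 = (1/2:ℝ)^(k+1) := by rw [pow_succ]; ring
    rw [h2] at h
    have hpow : (2:ℝ)^k * (1/2:ℝ)^k = 1 := by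
      rw [← mul_pow]; norm_num
    have hmul := mul_le_mul_of_nonneg_left h (show (0:ℝ) ≤ 2^k by positivity)
    calc (2:ℝ)^k * ψf k ≤ (2:ℝ)^k * (ψf (k+1) + (1/2:ℝ)^k * (Gf k - Gf (k+1))) := hmul
      _ = (2:ℝ)^k * ψf (k+1) + ((2:ℝ)^k * (1/2:ℝ)^k) * (Gf k - Gf (k+1)) := by ring
      _ = (2:ℝ)^k * ψf (k+1) + (Gf k - Gf (k+1)) := by rw [hpow, one_mul]
  have hsum : ∑ k ∈ Finset.range n, (2:ℝ)^k * ψf k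
      ≤ ∑ k ∈ Finset.range n, (2:ℝ)^k * ψf (k+1) + (Gf 0 - Gf n) := by
    calc ∑ k ∈ Finset.range n, (2:ℝ)^k * ψf k
        ≤ ∑ k ∈ Finset.range n, ((2:ℝ)^k * ψf (k+1) + (Gf k - Gf (k+1))) :=
          Finset.sum_le_sum fun k _ => hrec k
      _ = ∑ k ∈ Finset.range n, (2:ℝ)^k * ψf (k+1)
          + ∑ k ∈ Finset.range n, (Gf k - Gf (k+1)) := Finset.sum_add_distrib
      _ = _ := by rw [Finset.sum_range_sub' Gf n]
  have hshift : (∑ k ∈ Finset.range n, (2:ℝ)^k * ψf (k+1)) * 2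
      = ∑ k ∈ Finset.range (n+1), (2:ℝ)^k * ψf k - ψf 0 := by
    rw [Finset.sum_range_succ' (fun k => (2:ℝ)^k * ψf k) n, Finset.sum_mul]
    simp only [pow_zero, one_mul]
    rw [add_sub_cancel_right]
    exact Finset.sum_congr rfl fun k _ => by rw [pow_succ]; ring
  have hlast : (2:ℝ)^n * ψf n ≤ 2 * Q := by
    have h := mul_le_mul_of_nonneg_left (hψub n) (show (0:ℝ) ≤ 2^n by positivity)
    have hpow : (2:ℝ)^n * (1/2:ℝ)^n = 1 := by rw [← mul_pow]; norm_num
    calc (2:ℝ)^n * ψf n ≤ (2:ℝ)^n * (2 * Q * (1/2:ℝ)^n) := h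
      _ = 2 * Q * ((2:ℝ)^n * (1/2:ℝ)^n) := by ring
      _ = 2 * Q := by rw [hpow, mul_one]
  have hsucc : ∑ k ∈ Finset.range (n+1), (2:ℝ)^k * ψf k
      = ∑ k ∈ Finset.range n, (2:ℝ)^k * ψf k + (2:ℝ)^n * ψf n :=
    Finset.sum_range_succ _ n
  have hG : Gf 0 - Gf n ≤ 2 * Q := by
    have h1 := hGub 0
    have h2 := hGlb n
    have h3 := abs_le.1 hq₀
    linarith
  have h0 := hψ0 0
  linarith [hsum, hshift, hlast, hsucc, hG]


end DiniCore


namespace DiniCore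

lemma div_identity (A B p P : ℝ) (hB : B ≠ 0) :
    (-B) * ((A / (-B)) * p - P) = A * p + B * P := by
  have hB' : -B ≠ 0 := neg_ne_zero.2 hB
  have h1 : A / (-B) * (-B) = A := div_mul_cancel₀ A hB'
  linear_combination p * h1

noncomputable def pp (u : EuclideanSpace ℝ (Fin 2)) : EuclideanSpace ℝ (Fin 2) :=
  (WithLp.equiv 2 (Fin 2 → ℝ)).symm ![-(u 1), u 0]

lemma exists_perp (u : EuclideanSpace ℝ (Fin 2)) (hu : ‖u‖ = 1) :
    ∃ w : EuclideanSpace ℝ (Fin 2), ‖w‖ = 1 ∧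
      ∀ v : EuclideanSpace ℝ (Fin 2), v = ⟪v, w⟫ • w + ⟪v, u⟫ • u := by
  have hinner : ∀ a b : EuclideanSpace ℝ (Fin 2), ⟪a, b⟫ = a 0 * b 0 + a 1 * b 1 := by
    intro a b
    simp [PiLp.inner_apply, Fin.sum_univ_two, RCLike.inner_apply, conj_trivial]
    ring
  have huu : u 0 * u 0 + u 1 * u 1 = 1 := by
    have h : ⟪u, u⟫ = ‖u‖ ^ 2 := real_inner_self_eq_norm_sq u
    rw [hu, hinner, one_pow] at h; exact h
  have e0 : pp u 0 = -(u 1) := by simp [pp]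
  have e1 : pp u 1 = u 0 := by simp [pp]
  refine ⟨pp u, ?_, ?_⟩
  · have h1 : ⟪pp u, pp u⟫ = 1 := by rw [hinner, e0, e1]; nlinarith [huu]
    have h2 : ‖pp u‖ ^ 2 = 1 := by rw [← real_inner_self_eq_norm_sq]; exact h1
    nlinarith [norm_nonneg (pp u)]
  · intro v
    ext i
    fin_cases i
    · simp only [Fin.zero_eta, Fin.mk_one, Fin.isValue, PiLp.add_apply, PiLp.smul_apply,
        smul_eq_mul, hinner, e0, e1]
      linear_combination (-(v 0)) * huu
    · simp only [Fin.zero_eta, Fin.mk_one, Fin.isValue, PiLp.add_apply, PiLp.smul_apply,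
        smul_eq_mul, hinner, e0, e1]
      linear_combination (-(v 1)) * huu

end DiniCore

set_option maxHeartbeats 2000000 in
/-- The Dini condition holds for all planar convex domains (Proposition 7.2). -/
theorem dini_planar (Ω : Set (EuclideanSpace ℝ (Fin 2)))
    (hopen : IsOpen Ω) (hbdd : Bornology.IsBounded Ω)
    (hconv : Convex ℝ Ω) (hne : Ω.Nonempty) :
    ∃ Cstar : ℝ, ∀ x ∈ frontier Ω,
      ∫⁻ t in Ioo (0:ℝ) 1, ENNReal.ofReal (Mfun Ω x t / t ^ 2) ≤ ENNReal.ofReal Cstar := by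
  classical
  obtain ⟨z₀, hz₀⟩ := hne
  obtain ⟨ρ, hρpos, hball⟩ := Metric.isOpen_iff.1 hopen z₀ hz₀
  obtain ⟨R₀, hR₀⟩ := hbdd.subset_closedBall z₀
  set R := max R₀ ρ with hRdef
  have hρR : ρ ≤ R := le_max_right _ _
  have hRpos : 0 < R := lt_of_lt_of_le hρpos hρR
  have hΩR : closure Ω ⊆ Metric.closedBall z₀ R :=
    closure_minimal (hR₀.trans (Metric.closedBall_subset_closedBall (le_max_left _ _)))
      Metric.isClosed_closedBall
  set κ := ρ / (2 * R) with hκdef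
  have hκpos : 0 < κ := by positivity
  have hκhalf : κ ≤ 1/2 := by
    rw [hκdef, div_le_iff₀ (by positivity)]
    linarith
  set Q := Real.sqrt (1 - κ^2) / κ with hQdef
  have hQ0 : 0 ≤ Q := by positivity
  have hκ2 : (0:ℝ) ≤ 1 - κ^2 := by nlinarith
  have hQκ : Q^2 * κ^2 = 1 - κ^2 := by
    rw [hQdef, div_pow, Real.sq_sqrt hκ2]
    field_simp
  obtain ⟨N, hN⟩ := pow_unbounded_of_one_lt (2/ρ) (one_lt_two (α := ℝ))
  refine ⟨24 * Q + 2 * N, ?_⟩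
  intro x hx
  have hxcl : x ∈ closure Ω := frontier_subset_closure hx
  have hxnot : x ∉ Ω := by
    have h := hx
    rw [hopen.frontier_eq] at h
    exact h.2
  have hCconv : Convex ℝ (closure Ω) := hconv.closure
  have hCcomp : IsCompact (closure Ω) := hbdd.isCompact_closure
  have hd : ρ ≤ ‖z₀ - x‖ := by
    by_contra hcon
    push_neg at hcon
    refine hxnot (hball ?_)
    rw [Metric.mem_ball, dist_eq_norm, ← norm_neg]
    simpa [neg_sub] using hcon
  have hdpos : 0 < ‖z₀ - x‖ := lt_of_lt_of_le hρpos hd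
  have hdR : ‖z₀ - x‖ ≤ R := by
    have h := hΩR hxcl
    rw [Metric.mem_closedBall, dist_eq_norm] at h
    rw [← norm_neg]
    simpa [neg_sub] using h
  have hune : z₀ - x ≠ 0 := by
    intro h
    rw [h, norm_zero] at hdpos
    exact lt_irrefl _ hdpos
  set u := (‖z₀ - x‖⁻¹ : ℝ) • (z₀ - x) with hudef
  have hu : ‖u‖ = 1 := norm_smul_inv_norm hune
  obtain ⟨w, hw1, hexp⟩ := DiniCore.exists_perp u hu
  have hexpm : ∀ v : EuclideanSpace ℝ (Fin 2), v = ⟪v, -w⟫ • (-w) + ⟪v, u⟫ • u := by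
    intro v
    rw [inner_neg_right, neg_smul, smul_neg, neg_neg]
    exact hexp v
  -- window estimate from the interior ball
  have hwindow : ∀ (y ν : EuclideanSpace ℝ (Fin 2)),
      (∀ z ∈ closure Ω, ⟪ν, z - y⟫ ≤ 0) → ‖ν‖ = 1 → ⟪ν, z₀ - y⟫ ≤ -ρ := by
    intro y ν hsup hν
    by_contra hcon
    push_neg at hcon
    set c := (max (-⟪ν, z₀ - y⟫) 0 + ρ) / 2 with hcdef
    have hmax0 : (0:ℝ) ≤ max (-⟪ν, z₀ - y⟫) 0 := le_max_right _ _
    have hc0 : 0 < c := by rw [hcdef]; positivity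
    have hmaxρ : max (-⟪ν, z₀ - y⟫) 0 < ρ := max_lt (by linarith) hρpos
    have hcρ : c < ρ := by rw [hcdef]; linarith
    have hXc : -⟪ν, z₀ - y⟫ < c := by
      have h1 : -⟪ν, z₀ - y⟫ ≤ max (-⟪ν, z₀ - y⟫) 0 := le_max_left _ _
      rw [hcdef]; linarith
    have hzc : z₀ + c • ν ∈ Ω := by
      refine hball ?_
      rw [Metric.mem_ball, dist_eq_norm]
      have : z₀ + c • ν - z₀ = c • ν := by abel
      rw [this, norm_smul, hν, mul_one]
      rwa [Real.norm_eq_abs, abs_of_pos hc0]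
    have h := hsup _ (subset_closure hzc)
    have hrw : z₀ + c • ν - y = (z₀ - y) + c • ν := by abel
    rw [hrw, inner_add_right, real_inner_smul_right] at h
    have hνν : ⟪ν, ν⟫ = 1 := by
      rw [real_inner_self_eq_norm_sq, hν]; norm_num
    rw [hνν, mul_one] at h
    linarith
  -- slope data for a supported pair
  have hslope : ∀ (w' : EuclideanSpace ℝ (Fin 2)),
      (∀ v : EuclideanSpace ℝ (Fin 2), v = ⟪v, w'⟫ • w' + ⟪v, u⟫ • u) →
      ∀ (y ν : EuclideanSpace ℝ (Fin 2)), ‖ν‖ = 1 →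
      (∀ z ∈ closure Ω, ⟪ν, z - y⟫ ≤ 0) → y ∈ closure Ω → ⟪ν, y - x⟫ ≤ ρ/2 →
      |⟪ν, w'⟫ / (-⟪ν, u⟫)| ≤ Q ∧
      (∀ z ∈ closure Ω, (⟪ν, w'⟫ / (-⟪ν, u⟫)) * ⟪z - x, w'⟫ - ⟪z - x, u⟫
          ≤ (⟪ν, w'⟫ / (-⟪ν, u⟫)) * ⟪y - x, w'⟫ - ⟪y - x, u⟫) ∧
      ⟪ν, y - x⟫ ≤ (⟪ν, w'⟫ / (-⟪ν, u⟫)) * ⟪y - x, w'⟫ - ⟪y - x, u⟫ := by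
    intro w' hexp' y ν hν hsup hyC hm
    have hX : ⟪ν, z₀ - y⟫ ≤ -ρ := hwindow y ν hsup hν
    have hz₀x : ⟪ν, z₀ - x⟫ ≤ -(ρ/2) := by
      have he : ⟪ν, z₀ - x⟫ = ⟪ν, z₀ - y⟫ + ⟪ν, y - x⟫ := by
        rw [← inner_add_right]
        congr 1
        abel
      rw [he]; linarith
    have hbu : ⟪ν, u⟫ * ‖z₀ - x‖ = ⟪ν, z₀ - x⟫ := by
      rw [hudef, real_inner_smul_right]
      field_simp
    have hbκ : ⟪ν, u⟫ ≤ -κ := by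
      have hb0 : ⟪ν, u⟫ < 0 := by nlinarith
      rw [hκdef, show -(ρ/(2*R)) = (-ρ)/(2*R) by ring, le_div_iff₀ (by positivity)]
      nlinarith
    have hb1 : -⟪ν, u⟫ ≤ 1 := by
      have h := abs_real_inner_le_norm ν u
      rw [hν, hu, one_mul] at h
      have := abs_le.1 h
      linarith [this.1]
    have hbneg : 0 < -⟪ν, u⟫ := by linarith
    have hbne : ⟪ν, u⟫ ≠ 0 := by intro h; rw [h] at hbneg; simp at hbneg
    have hab : ⟪ν, w'⟫^2 + ⟪ν, u⟫^2 = 1 := by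
      have h2 := congrArg (fun t => ⟪ν, t⟫) (hexp' ν)
      simp only [inner_add_right, real_inner_smul_right] at h2
      have h3 : ⟪ν, ν⟫ = 1 := by rw [real_inner_self_eq_norm_sq, hν]; norm_num
      rw [h3] at h2
      nlinarith [h2]
    have hqQ : |⟪ν, w'⟫ / (-⟪ν, u⟫)| ≤ Q := by
      have hk2 : κ^2 ≤ ⟪ν, u⟫^2 := by nlinarith
      have ha2 : ⟪ν, w'⟫^2 ≤ Q^2 * ⟪ν, u⟫^2 := by nlinarith [hQκ]
      have habs : |(-⟪ν, u⟫)| = -⟪ν, u⟫ := abs_of_pos hbneg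
      rw [abs_div, habs, div_le_iff₀ hbneg]
      have h1 : |⟪ν, w'⟫| = Real.sqrt (⟪ν, w'⟫^2) := (Real.sqrt_sq_eq_abs _).symm
      have h2 : Q * (-⟪ν, u⟫) = Real.sqrt ((Q * (-⟪ν, u⟫))^2) :=
        (Real.sqrt_sq (by positivity)).symm
      rw [h1, h2]
      apply Real.sqrt_le_sqrt
      nlinarith [ha2]
    have hform : ∀ p P : ℝ, ⟪ν, w'⟫ * p + ⟪ν, u⟫ * P ≤ 0 →
        (⟪ν, w'⟫ / (-⟪ν, u⟫)) * p - P ≤ 0 := by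
      intro p P h
      have he := DiniCore.div_identity ⟪ν, w'⟫ ⟪ν, u⟫ p P hbne
      nlinarith [he, h, hbneg]
    have hdec : ∀ z : EuclideanSpace ℝ (Fin 2),
        ⟪ν, z⟫ = ⟪ν, w'⟫ * ⟪z, w'⟫ + ⟪ν, u⟫ * ⟪z, u⟫ := by
      intro z
      have h2 := congrArg (fun t => ⟪t, z⟫) (hexp' ν)
      simp only [inner_add_left, real_inner_smul_left] at h2
      rw [h2, real_inner_comm w' z, real_inner_comm u z]
    refine ⟨hqQ, ?_, ?_⟩
    · intro z hz
      have h := hsup z hz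
      have hzy : ⟪ν, z - y⟫ = ⟪ν, w'⟫ * (⟪z - x, w'⟫ - ⟪y - x, w'⟫)
          + ⟪ν, u⟫ * (⟪z - x, u⟫ - ⟪y - x, u⟫) := by
        have h1 : z - y = (z - x) - (y - x) := by abel
        rw [h1, hdec ((z - x) - (y - x))]
        simp only [inner_sub_left]
        try ring
      rw [hzy] at h
      have := hform (⟪z - x, w'⟫ - ⟪y - x, w'⟫) (⟪z - x, u⟫ - ⟪y - x, u⟫) h
      linarith
    · have hm0 : 0 ≤ ⟪ν, y - x⟫ := by
        have h := hsup x hxcl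
        have h2 : ⟪ν, x - y⟫ = -⟪ν, y - x⟫ := by
          rw [← inner_neg_right, neg_sub]
        rw [h2] at h
        linarith
      have hdecy : ⟪ν, y - x⟫ = ⟪ν, w'⟫ * ⟪y - x, w'⟫ + ⟪ν, u⟫ * ⟪y - x, u⟫ := hdec (y - x)
      have he : ⟪ν, y - x⟫ = (-⟪ν, u⟫) * ((⟪ν, w'⟫ / (-⟪ν, u⟫)) * ⟪y - x, w'⟫ - ⟪y - x, u⟫) := by
        rw [hdecy, DiniCore.div_identity ⟪ν, w'⟫ ⟪ν, u⟫ ⟪y - x, w'⟫ ⟪y - x, u⟫ hbne]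
      have hv0 : 0 ≤ (⟪ν, w'⟫ / (-⟪ν, u⟫)) * ⟪y - x, w'⟫ - ⟪y - x, u⟫ := by
        nlinarith [he, hm0, hbneg]
      nlinarith [he, hv0, hb1, hbneg]
  -- the supporting normal at x
  obtain ⟨φ, hφ⟩ := geometric_hahn_banach_open_point hconv hopen hxnot
  set ν₀' := (InnerProductSpace.toDual ℝ (EuclideanSpace ℝ (Fin 2))).symm φ with hν₀'def
  have hν₀'app : ∀ z, ⟪ν₀', z⟫ = φ z := fun z => InnerProductSpace.toDual_symm_apply
  have hν₀'ne : ν₀' ≠ 0 := by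
    intro h
    have h2 : (0:ℝ) < ⟪ν₀', x⟫ - ⟪ν₀', z₀⟫ := by
      rw [hν₀'app, hν₀'app]
      linarith [hφ z₀ hz₀]
    rw [h] at h2
    simp at h2
  set ν₀ := (‖ν₀'‖⁻¹ : ℝ) • ν₀' with hν₀def
  have hν₀ : ‖ν₀‖ = 1 := norm_smul_inv_norm hν₀'ne
  have hsup₀ : ∀ z ∈ closure Ω, ⟪ν₀, z - x⟫ ≤ 0 := by
    have hopenle : ∀ z ∈ Ω, ⟪ν₀, z - x⟫ ≤ 0 := by
      intro z hz
      rw [hν₀def, real_inner_smul_left, inner_sub_right, hν₀'app, hν₀'app]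
      have h := hφ z hz
      have hn : (0:ℝ) ≤ ‖ν₀'‖⁻¹ := by positivity
      nlinarith
    intro z hz
    have hclosed : IsClosed {z : EuclideanSpace ℝ (Fin 2) | ⟪ν₀, z - x⟫ ≤ 0} :=
      isClosed_le (continuous_const.inner (continuous_id.sub continuous_const))
        continuous_const
    exact closure_minimal hopenle hclosed hz
  have hsup₀' : ∀ z ∈ closure Ω, ⟪ν₀, z - x⟫ ≤ 0 := hsup₀
  have hm₀ : ⟪ν₀, x - x⟫ ≤ ρ/2 := by
    simp [hρpos.le]
    positivity
  -- base slopes for the two sides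
  obtain ⟨hq₀pQ, hq₀psupp0, _⟩ := hslope w hexp x ν₀ hν₀ hsup₀ hxcl hm₀
  obtain ⟨hq₀mQ, hq₀msupp0, _⟩ := hslope (-w) hexpm x ν₀ hν₀ hsup₀ hxcl hm₀
  set q₀p := ⟪ν₀, w⟫ / (-⟪ν₀, u⟫) with hq₀pdef
  set q₀m := ⟪ν₀, -w⟫ / (-⟪ν₀, u⟫) with hq₀mdef
  have hq₀psupp : ∀ z ∈ closure Ω, q₀p * ⟪z - x, w⟫ - ⟪z - x, u⟫ ≤ 0 := by
    intro z hz
    have h := hq₀psupp0 z hz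
    simpa using h
  have hq₀msupp : ∀ z ∈ closure Ω, q₀m * ⟪z - x, -w⟫ - ⟪z - x, u⟫ ≤ 0 := by
    intro z hz
    have h := hq₀msupp0 z hz
    simpa using h
  -- the dyadic suprema
  set ψp : ℕ → ℝ := fun k => sSup (DiniCore.sideSet (closure Ω) x u w Q ((1/2:ℝ)^k)) with hψp
  set ψm : ℕ → ℝ := fun k => sSup (DiniCore.sideSet (closure Ω) x u (-w) Q ((1/2:ℝ)^k)) with hψm
  have hψp0 : ∀ k, 0 ≤ ψp k := fun k => DiniCore.psi_nonneg hxcl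
  have hψm0 : ∀ k, 0 ≤ ψm k := fun k => DiniCore.psi_nonneg hxcl
  -- the pointwise bound on Mfun
  have hM : ∀ (k : ℕ) (t : ℝ), t ≤ (1/2:ℝ)^k →
      Mfun Ω x t ≤ ψp k + ψm k + (if ρ/2 ≤ (1/2:ℝ)^k then (1/2:ℝ)^k else 0) := by
    intro k t ht
    have hi0 : (0:ℝ) ≤ (if ρ/2 ≤ (1/2:ℝ)^k then (1/2:ℝ)^k else 0) := by
      split_ifs <;> positivity
    refine Real.sSup_le ?_ (by linarith [hψp0 k, hψm0 k])
    rintro m ⟨y, ν, hyf, hr0, hrt, ⟨hν1, hνsupp⟩, rfl⟩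
    have hycl : y ∈ closure Ω := frontier_subset_closure hyf
    have hsupcl : ∀ z ∈ closure Ω, ⟪ν, z - y⟫ ≤ 0 := by
      intro z hz
      have hclosed : IsClosed {z : EuclideanSpace ℝ (Fin 2) | ⟪ν, z - y⟫ ≤ 0} :=
        isClosed_le (continuous_const.inner (continuous_id.sub continuous_const))
          continuous_const
      exact closure_minimal hνsupp hclosed hz
    have hmnn : 0 ≤ ⟪ν, y - x⟫ := by
      have h := hsupcl x hxcl
      have h2 : ⟪ν, x - y⟫ = -⟪ν, y - x⟫ := by rw [← inner_neg_right, neg_sub]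
      rw [h2] at h
      linarith
    have hnorm : ⟪ν, y - x⟫ ≤ ‖y - x‖ := by
      have h := real_inner_le_norm ν (y - x)
      rwa [hν1, one_mul] at h
    by_cases hlow : ⟪ν, y - x⟫ ≤ ρ/2
    · have habsw : |⟪y - x, w⟫| ≤ (1/2:ℝ)^k := by
        have h := abs_real_inner_le_norm (y - x) w
        rw [hw1, mul_one] at h
        linarith [hrt.trans ht]
      rcases lt_trichotomy (⟪y - x, w⟫) 0 with hneg | hzero | hpos
      · obtain ⟨hqQ, hsupp, hval⟩ := hslope (-w) hexpm y ν hν1 hsupcl hycl hlow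
        have hmem : (⟪ν, -w⟫ / (-⟪ν, u⟫)) * ⟪y - x, -w⟫ - ⟪y - x, u⟫
            ∈ DiniCore.sideSet (closure Ω) x u (-w) Q ((1/2:ℝ)^k) := by
          refine ⟨⟪y - x, -w⟫, ⟪y - x, u⟫, ⟪ν, -w⟫ / (-⟪ν, u⟫), y, hqQ, ?_, ?_, hycl,
            rfl, rfl, hsupp, rfl⟩
          · rw [inner_neg_right]; linarith
          · rw [inner_neg_right]
            have := abs_le.1 habsw
            linarith [this.1]
        have h2 := le_csSup (DiniCore.sideSet_bddAbove hq₀mQ hq₀msupp) hmem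
        have h3 := hval.trans h2
        have h4 : ψm k = sSup (DiniCore.sideSet (closure Ω) x u (-w) Q ((1/2:ℝ)^k)) := rfl
        rw [← h4] at h3
        linarith [hψp0 k, hi0]
      · obtain ⟨hqQ, hsupp, hval⟩ := hslope w hexp y ν hν1 hsupcl hycl hlow
        have hη0 : 0 ≤ ⟪y - x, u⟫ := by
          have h := hq₀psupp y hycl
          rw [hzero, mul_zero, zero_sub] at h
          linarith
        rw [hzero] at hval
        have : ⟪ν, y - x⟫ ≤ 0 := by
          rw [mul_zero] at hval
          linarith
        linarith [hψp0 k, hψm0 k, hi0]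
      · obtain ⟨hqQ, hsupp, hval⟩ := hslope w hexp y ν hν1 hsupcl hycl hlow
        have hmem : (⟪ν, w⟫ / (-⟪ν, u⟫)) * ⟪y - x, w⟫ - ⟪y - x, u⟫
            ∈ DiniCore.sideSet (closure Ω) x u w Q ((1/2:ℝ)^k) := by
          refine ⟨⟪y - x, w⟫, ⟪y - x, u⟫, ⟪ν, w⟫ / (-⟪ν, u⟫), y, hqQ, hpos, ?_, hycl,
            rfl, rfl, hsupp, rfl⟩
          have := abs_le.1 habsw
          linarith [this.2]
        have h2 := le_csSup (DiniCore.sideSet_bddAbove hq₀pQ hq₀psupp) hmem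
        have h3 := hval.trans h2
        have h4 : ψp k = sSup (DiniCore.sideSet (closure Ω) x u w Q ((1/2:ℝ)^k)) := rfl
        rw [← h4] at h3
        linarith [hψm0 k, hi0]
    · push_neg at hlow
      have hmk : ⟪ν, y - x⟫ ≤ (1/2:ℝ)^k := by
        calc ⟪ν, y - x⟫ ≤ ‖y - x‖ := hnorm
          _ ≤ t := hrt
          _ ≤ (1/2:ℝ)^k := ht
      have hcond : ρ/2 ≤ (1/2:ℝ)^k := le_of_lt (lt_of_lt_of_le hlow hmk)
      rw [if_pos hcond]
      linarith [hψp0 k, hψm0 k]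
  -- telescoping bounds
  have htelp : ∀ n, ∑ k ∈ Finset.range n, (2:ℝ)^k * ψp k ≤ 6 * Q := fun n =>
    DiniCore.telescope hCconv hCcomp hxcl hq₀pQ hq₀psupp n
  have htelm : ∀ n, ∑ k ∈ Finset.range n, (2:ℝ)^k * ψm k ≤ 6 * Q := fun n =>
    DiniCore.telescope hCconv hCcomp hxcl hq₀mQ hq₀msupp n
  -- dyadic cover of (0,1)
  have hcover : Ioo (0:ℝ) 1 ⊆ ⋃ k : ℕ, Ico ((1/2:ℝ)^(k+1)) ((1/2:ℝ)^k) := by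
    intro t ht
    have hPex : ∃ n : ℕ, (1/2:ℝ)^(n+1) ≤ t := by
      obtain ⟨n₀, hn₀⟩ := exists_pow_lt_of_lt_one ht.1 (by norm_num : (1/2:ℝ) < 1)
      refine ⟨n₀, ?_⟩
      have hp : (0:ℝ) < (1/2:ℝ)^n₀ := by positivity
      rw [pow_succ]
      nlinarith [hn₀]
    have hk1 : (1/2:ℝ)^(Nat.find hPex + 1) ≤ t := Nat.find_spec hPex
    have hk2 : t < (1/2:ℝ)^(Nat.find hPex) := by
      rcases Nat.eq_zero_or_pos (Nat.find hPex) with h0 | hposk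
      · rw [h0, pow_zero]; exact ht.2
      · obtain ⟨j, hj⟩ := Nat.exists_eq_succ_of_ne_zero (Nat.pos_iff_ne_zero.1 hposk)
        have hmin := Nat.find_min hPex (m := j) (by omega)
        push_neg at hmin
        rw [hj]
        exact hmin
    exact Set.mem_iUnion.2 ⟨Nat.find hPex, hk1, hk2⟩
  set B : ℕ → ℝ := fun k => ψp k + ψm k + (if ρ/2 ≤ (1/2:ℝ)^k then (1/2:ℝ)^k else 0) with hB
  clear_value B
  have hind0 : ∀ k : ℕ, (0:ℝ) ≤ (if ρ/2 ≤ (1/2:ℝ)^k then (1/2:ℝ)^k else 0) := by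
    intro k
    split_ifs <;> positivity
  have hB0 : ∀ k, 0 ≤ B k := by
    intro k
    simp only [hB]
    linarith [hψp0 k, hψm0 k, hind0 k]
  have hMB : ∀ (k : ℕ) (t : ℝ), t ≤ (1/2:ℝ)^k → Mfun Ω x t ≤ B k := by
    intro k t ht
    simp only [hB]
    exact hM k t ht
  have hpiece : ∀ k : ℕ, (∫⁻ t in Ico ((1/2:ℝ)^(k+1)) ((1/2:ℝ)^k),
      ENNReal.ofReal (Mfun Ω x t / t^2))
      ≤ ENNReal.ofReal (2^(k+1) * B k) := by
    intro k
    have h44 : ((1/2:ℝ)^(k+1))^2 * 4^(k+1) = 1 := by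
      rw [← pow_mul, mul_comm (k+1) 2, pow_mul, ← mul_pow]
      norm_num
    have hbound : ∀ t ∈ Ico ((1/2:ℝ)^(k+1)) ((1/2:ℝ)^k),
        ENNReal.ofReal (Mfun Ω x t / t^2) ≤ ENNReal.ofReal (4^(k+1) * B k) := by
      rintro t ⟨ht1, ht2⟩
      apply ENNReal.ofReal_le_ofReal
      have ht0 : (0:ℝ) < t := lt_of_lt_of_le (by positivity) ht1
      have hM' : Mfun Ω x t ≤ B k := hMB k t ht2.le
      have ht2pos : (0:ℝ) < t^2 := by positivity
      have hlow2 : ((1/2:ℝ)^(k+1))^2 ≤ t^2 := by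
        nlinarith [ht1, (by positivity : (0:ℝ) ≤ (1/2:ℝ)^(k+1))]
      rw [div_le_iff₀ ht2pos]
      have e1 : (4:ℝ)^(k+1) * B k * ((1/2:ℝ)^(k+1))^2 = B k := by
        linear_combination (B k) * h44
      have e2 : (4:ℝ)^(k+1) * B k * ((1/2:ℝ)^(k+1))^2 ≤ 4^(k+1) * B k * t^2 :=
        mul_le_mul_of_nonneg_left hlow2 (mul_nonneg (by positivity) (hB0 k))
      nlinarith [hM', e1, e2]
    calc (∫⁻ t in Ico ((1/2:ℝ)^(k+1)) ((1/2:ℝ)^k), ENNReal.ofReal (Mfun Ω x t / t^2))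
        ≤ ∫⁻ _ in Ico ((1/2:ℝ)^(k+1)) ((1/2:ℝ)^k), ENNReal.ofReal (4^(k+1) * B k) :=
          setLIntegral_mono' measurableSet_Ico hbound
      _ = ENNReal.ofReal (4^(k+1) * B k) * volume (Ico ((1/2:ℝ)^(k+1)) ((1/2:ℝ)^k)) :=
          setLIntegral_const _ _
      _ = ENNReal.ofReal (4^(k+1) * B k) * ENNReal.ofReal ((1/2:ℝ)^(k+1)) := by
          rw [Real.volume_Ico]
          congr 1
          rw [pow_succ]
          ring
      _ = ENNReal.ofReal (4^(k+1) * B k * (1/2:ℝ)^(k+1)) :=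
          (ENNReal.ofReal_mul (mul_nonneg (by positivity) (hB0 k))).symm
      _ = ENNReal.ofReal (2^(k+1) * B k) := by
          congr 1
          have h42 : (4:ℝ)^(k+1) * (1/2:ℝ)^(k+1) = 2^(k+1) := by
            rw [← mul_pow]
            norm_num
          linear_combination (B k) * h42
  have hchain : (∫⁻ t in Ioo (0:ℝ) 1, ENNReal.ofReal (Mfun Ω x t / t ^ 2))
      ≤ ∑' k : ℕ, ENNReal.ofReal (2^(k+1) * B k) := by
    calc (∫⁻ t in Ioo (0:ℝ) 1, ENNReal.ofReal (Mfun Ω x t / t ^ 2))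
        ≤ ∫⁻ t in ⋃ k : ℕ, Ico ((1/2:ℝ)^(k+1)) ((1/2:ℝ)^k),
            ENNReal.ofReal (Mfun Ω x t / t ^ 2) := lintegral_mono_set hcover
      _ ≤ ∑' k : ℕ, ∫⁻ t in Ico ((1/2:ℝ)^(k+1)) ((1/2:ℝ)^k),
            ENNReal.ofReal (Mfun Ω x t / t ^ 2) := lintegral_iUnion_le _ _
      _ ≤ ∑' k : ℕ, ENNReal.ofReal (2^(k+1) * B k) := ENNReal.tsum_le_tsum hpiece
  refine hchain.trans ?_
  have hsplit : ∀ k : ℕ, ENNReal.ofReal (2^(k+1) * B k)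
      = ENNReal.ofReal (2^(k+1) * ψp k) + ENNReal.ofReal (2^(k+1) * ψm k)
        + ENNReal.ofReal (2^(k+1) * (if ρ/2 ≤ (1/2:ℝ)^k then (1/2:ℝ)^k else 0)) := by
    intro k
    have e : (2:ℝ)^(k+1) * B k = 2^(k+1) * ψp k + (2^(k+1) * ψm k
        + 2^(k+1) * (if ρ/2 ≤ (1/2:ℝ)^k then (1/2:ℝ)^k else 0)) := by
      simp only [hB]
      ring
    rw [e, ENNReal.ofReal_add (mul_nonneg (by positivity) (hψp0 k))
        (add_nonneg (mul_nonneg (by positivity) (hψm0 k))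
          (mul_nonneg (by positivity) (hind0 k))),
      ENNReal.ofReal_add (mul_nonneg (by positivity) (hψm0 k))
        (mul_nonneg (by positivity) (hind0 k)), ← add_assoc]
  have hsum1 : ∑' k : ℕ, ENNReal.ofReal (2^(k+1) * ψp k) ≤ ENNReal.ofReal (12 * Q) := by
    apply ENNReal.summable.tsum_le_of_sum_le
    intro s
    obtain ⟨n, hn⟩ := s.exists_nat_subset_range
    calc ∑ k ∈ s, ENNReal.ofReal (2^(k+1) * ψp k)
        ≤ ∑ k ∈ Finset.range n, ENNReal.ofReal (2^(k+1) * ψp k) :=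
          Finset.sum_le_sum_of_subset hn
      _ = ENNReal.ofReal (∑ k ∈ Finset.range n, (2:ℝ)^(k+1) * ψp k) :=
          (ENNReal.ofReal_sum_of_nonneg fun k _ => mul_nonneg (by positivity) (hψp0 k)).symm
      _ ≤ ENNReal.ofReal (12 * Q) := by
          apply ENNReal.ofReal_le_ofReal
          have h2 : ∑ k ∈ Finset.range n, (2:ℝ)^(k+1) * ψp k
              = 2 * ∑ k ∈ Finset.range n, (2:ℝ)^k * ψp k := by
            rw [Finset.mul_sum]
            exact Finset.sum_congr rfl fun k _ => by rw [pow_succ]; ring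
          rw [h2]
          linarith [htelp n]
  have hsum2 : ∑' k : ℕ, ENNReal.ofReal (2^(k+1) * ψm k) ≤ ENNReal.ofReal (12 * Q) := by
    apply ENNReal.summable.tsum_le_of_sum_le
    intro s
    obtain ⟨n, hn⟩ := s.exists_nat_subset_range
    calc ∑ k ∈ s, ENNReal.ofReal (2^(k+1) * ψm k)
        ≤ ∑ k ∈ Finset.range n, ENNReal.ofReal (2^(k+1) * ψm k) :=
          Finset.sum_le_sum_of_subset hn
      _ = ENNReal.ofReal (∑ k ∈ Finset.range n, (2:ℝ)^(k+1) * ψm k) :=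
          (ENNReal.ofReal_sum_of_nonneg fun k _ => mul_nonneg (by positivity) (hψm0 k)).symm
      _ ≤ ENNReal.ofReal (12 * Q) := by
          apply ENNReal.ofReal_le_ofReal
          have h2 : ∑ k ∈ Finset.range n, (2:ℝ)^(k+1) * ψm k
              = 2 * ∑ k ∈ Finset.range n, (2:ℝ)^k * ψm k := by
            rw [Finset.mul_sum]
            exact Finset.sum_congr rfl fun k _ => by rw [pow_succ]; ring
          rw [h2]
          linarith [htelm n]
  have hsum3 : ∑' k : ℕ, ENNReal.ofReal (2^(k+1) * (if ρ/2 ≤ (1/2:ℝ)^k then (1/2:ℝ)^k else 0))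
      ≤ ENNReal.ofReal (2 * N) := by
    have hvanish : ∀ k ∉ Finset.range N,
        ENNReal.ofReal (2^(k+1) * (if ρ/2 ≤ (1/2:ℝ)^k then (1/2:ℝ)^k else 0)) = 0 := by
      intro k hk
      have hkN : N ≤ k := le_of_not_gt fun h => hk (Finset.mem_range.2 h)
      have h2k : (2:ℝ)/ρ < 2^k := lt_of_lt_of_le hN (pow_le_pow_right₀ one_le_two hkN)
      have h2kpos : (0:ℝ) < 2^k := by positivity
      have h2ρ : (2:ℝ) < ρ * 2^k := by nlinarith [(div_lt_iff₀ hρpos).1 h2k]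
      have hlt : (1/2:ℝ)^k < ρ/2 := by
        rw [show (1/2:ℝ)^k = 1/2^k by rw [div_pow, one_pow]]
        rw [div_lt_div_iff₀ h2kpos (by norm_num : (0:ℝ) < 2)]
        nlinarith [h2ρ]
      rw [if_neg (not_le.2 hlt), mul_zero]
      simp
    rw [tsum_eq_sum hvanish]
    calc ∑ k ∈ Finset.range N,
          ENNReal.ofReal (2^(k+1) * (if ρ/2 ≤ (1/2:ℝ)^k then (1/2:ℝ)^k else 0))
        ≤ ∑ _k ∈ Finset.range N, ENNReal.ofReal 2 := by
          apply Finset.sum_le_sum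
          intro k _
          apply ENNReal.ofReal_le_ofReal
          split_ifs with hcond
          · have he : (2:ℝ)^(k+1) * (1/2:ℝ)^k = 2 := by
              rw [pow_succ, show (2:ℝ)^k * 2 * (1/2:ℝ)^k = 2 * ((2:ℝ)^k * (1/2:ℝ)^k) by ring,
                ← mul_pow]
              norm_num
            exact le_of_eq he
          · rw [mul_zero]
            norm_num
      _ = (N : ENNReal) * ENNReal.ofReal 2 := by
          rw [Finset.sum_const, Finset.card_range, nsmul_eq_mul]
      _ = ENNReal.ofReal (2 * N) := by
          rw [← ENNReal.ofReal_natCast N, ← ENNReal.ofReal_mul (by positivity : (0:ℝ) ≤ (N:ℝ))]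
          rw [mul_comm]
  calc ∑' k : ℕ, ENNReal.ofReal (2^(k+1) * B k)
      = ∑' k : ℕ, (ENNReal.ofReal (2^(k+1) * ψp k) + ENNReal.ofReal (2^(k+1) * ψm k)
        + ENNReal.ofReal (2^(k+1) * (if ρ/2 ≤ (1/2:ℝ)^k then (1/2:ℝ)^k else 0))) :=
        tsum_congr hsplit
    _ = (∑' k : ℕ, ENNReal.ofReal (2^(k+1) * ψp k))
        + (∑' k : ℕ, ENNReal.ofReal (2^(k+1) * ψm k))
        + ∑' k : ℕ, ENNReal.ofReal (2^(k+1) * (if ρ/2 ≤ (1/2:ℝ)^k then (1/2:ℝ)^k else 0)) := by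
        rw [ENNReal.tsum_add, ENNReal.tsum_add]
    _ ≤ ENNReal.ofReal (12*Q) + ENNReal.ofReal (12*Q) + ENNReal.ofReal (2*N) :=
        add_le_add (add_le_add hsum1 hsum2) hsum3
    _ = ENNReal.ofReal (24 * Q + 2 * N) := by
        rw [← ENNReal.ofReal_add (by nlinarith [hQ0] : (0:ℝ) ≤ 12*Q)
            (by nlinarith [hQ0] : (0:ℝ) ≤ 12*Q),
          ← ENNReal.ofReal_add (by nlinarith [hQ0] : (0:ℝ) ≤ 12*Q + 12*Q)
            (by positivity : (0:ℝ) ≤ 2*(N:ℝ))]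
        congr 1
        ring
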